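/- arXiv:2208.12429 — 8 statements merged into one kernel-verified Lean document; each statement's English description precedes it below -/
import Mathlib

section
/- Let X, Y, Z, W be n×m complex matrices with X*W = Y*Z, rank(X) = rank(Z) = r, and reduced SVDs X = U₁Σ₁V₁*, Z = Ũ₁Σ̃₁Ṽ₁* where U₁, Ũ₁ ∈ ℂ^{n,r}. If U₁ = Ũ₁, then U₁*(YX⁺ + (YX⁺)*)U₁ = U₁*(YX⁺ + WZ⁺)U₁ and U₁*(YX⁺ − (YX⁺)*)U₁ = U₁*(YX⁺ − WZ⁺)U₁, where ⁺ denotes the Moore–Penrose pseudoinverse. -/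
open Matrix

/-- The four Penrose conditions characterizing the Moore–Penrose pseudoinverse. -/
def IsMoorePenrose {n m : Type*} [Fintype n] [Fintype m] [DecidableEq n] [DecidableEq m]
    (A : Matrix n m ℂ) (Ap : Matrix m n ℂ) : Prop :=
  A * Ap * A = A ∧ Ap * A * Ap = Ap ∧ (A * Ap)ᴴ = A * Ap ∧ (Ap * A)ᴴ = Ap * A

lemma mp_unique {n m : Type*} [Fintype n] [Fintype m] [DecidableEq n] [DecidableEq m]
    {A : Matrix n m ℂ} {P Q : Matrix m n ℂ}
    (hP : IsMoorePenrose A P) (hQ : IsMoorePenrose A Q) : P = Q := by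
  obtain ⟨hP1, hP2, hP3, hP4⟩ := hP
  obtain ⟨hQ1, hQ2, hQ3, hQ4⟩ := hQ
  have hAP : A * P = A * Q := by
    calc A * P = (A * Q) * (A * P) := by rw [← Matrix.mul_assoc, hQ1]
      _ = (A * Q)ᴴ * (A * P)ᴴ := by rw [hQ3, hP3]
      _ = Qᴴ * (A * P * A)ᴴ := by
          simp only [conjTranspose_mul, Matrix.mul_assoc]
      _ = Qᴴ * Aᴴ := by rw [hP1]
      _ = (A * Q)ᴴ := by rw [conjTranspose_mul]
      _ = A * Q := hQ3
  have hPA : P * A = Q * A := by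
    calc P * A = (P * A) * (Q * A) := by
          rw [Matrix.mul_assoc, ← Matrix.mul_assoc A, hQ1]
      _ = (P * A)ᴴ * (Q * A)ᴴ := by rw [hQ4, hP4]
      _ = (A * P * A)ᴴ * Qᴴ := by
          simp only [conjTranspose_mul, Matrix.mul_assoc]
      _ = Aᴴ * Qᴴ := by rw [hP1]
      _ = (Q * A)ᴴ := by rw [conjTranspose_mul]
      _ = Q * A := hQ4
  calc P = P * A * P := hP2.symm
    _ = Q * A * P := by rw [hPA]
    _ = Q * (A * Q) := by rw [Matrix.mul_assoc, hAP]
    _ = Q := by rw [← Matrix.mul_assoc, hQ2]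

/-- If `X` and `Z` have reduced SVDs with the same left factor `U₁`, `X*W = Y*Z`, and
`rank X = rank Z = r`, then `U₁*(YX⁺ ± (YX⁺)*)U₁ = U₁*(YX⁺ ± WZ⁺)U₁`. -/
theorem compress_pm_eq {n m r : ℕ}
    (X Y Z W : Matrix (Fin n) (Fin m) ℂ)
    (Xp Zp : Matrix (Fin m) (Fin n) ℂ)
    (hXp : IsMoorePenrose X Xp) (hZp : IsMoorePenrose Z Zp)
    (hXW : Xᴴ * W = Yᴴ * Z)
    (hrX : X.rank = r) (hrZ : Z.rank = r)
    (U₁ : Matrix (Fin n) (Fin r) ℂ) (V₁ W₁ : Matrix (Fin m) (Fin r) ℂ)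
    (σ τ : Fin r → ℝ)
    (hσ : ∀ i, 0 < σ i) (hτ : ∀ i, 0 < τ i)
    (hU : U₁ᴴ * U₁ = 1) (hV : V₁ᴴ * V₁ = 1) (hW : W₁ᴴ * W₁ = 1)
    (hX : X = U₁ * Matrix.diagonal (fun i => (σ i : ℂ)) * V₁ᴴ)
    (hZ : Z = U₁ * Matrix.diagonal (fun i => (τ i : ℂ)) * W₁ᴴ) :
    U₁ᴴ * (Y * Xp + (Y * Xp)ᴴ) * U₁ = U₁ᴴ * (Y * Xp + W * Zp) * U₁ ∧
    U₁ᴴ * (Y * Xp - (Y * Xp)ᴴ) * U₁ = U₁ᴴ * (Y * Xp - W * Zp) * U₁ := by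
  set D : Matrix (Fin r) (Fin r) ℂ := Matrix.diagonal (fun i => (σ i : ℂ)) with hD
  set E : Matrix (Fin r) (Fin r) ℂ := Matrix.diagonal (fun i => (τ i : ℂ)) with hE
  set Di : Matrix (Fin r) (Fin r) ℂ := Matrix.diagonal (fun i => ((σ i : ℂ))⁻¹) with hDi
  set Ei : Matrix (Fin r) (Fin r) ℂ := Matrix.diagonal (fun i => ((τ i : ℂ))⁻¹) with hEi
  have hσ0 : ∀ i, (σ i : ℂ) ≠ 0 := fun i => by
    exact_mod_cast Complex.ofReal_ne_zero.mpr (hσ i).ne'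
  have hτ0 : ∀ i, (τ i : ℂ) ≠ 0 := fun i => by
    exact_mod_cast Complex.ofReal_ne_zero.mpr (hτ i).ne'
  have hDDi : D * Di = 1 := by
    rw [hD, hDi, Matrix.diagonal_mul_diagonal]
    rw [show (fun i => (σ i : ℂ) * ((σ i : ℂ))⁻¹) = fun _ => (1 : ℂ) from
      funext fun i => mul_inv_cancel₀ (hσ0 i)]
    exact Matrix.diagonal_one
  have hDiD : Di * D = 1 := by
    rw [hD, hDi, Matrix.diagonal_mul_diagonal]
    rw [show (fun i => ((σ i : ℂ))⁻¹ * (σ i : ℂ)) = fun _ => (1 : ℂ) from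
      funext fun i => inv_mul_cancel₀ (hσ0 i)]
    exact Matrix.diagonal_one
  have hEEi : E * Ei = 1 := by
    rw [hE, hEi, Matrix.diagonal_mul_diagonal]
    rw [show (fun i => (τ i : ℂ) * ((τ i : ℂ))⁻¹) = fun _ => (1 : ℂ) from
      funext fun i => mul_inv_cancel₀ (hτ0 i)]
    exact Matrix.diagonal_one
  have hEiE : Ei * E = 1 := by
    rw [hE, hEi, Matrix.diagonal_mul_diagonal]
    rw [show (fun i => ((τ i : ℂ))⁻¹ * (τ i : ℂ)) = fun _ => (1 : ℂ) from
      funext fun i => inv_mul_cancel₀ (hτ0 i)]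
    exact Matrix.diagonal_one
  have hDH : Dᴴ = D := by
    have hfun : (star fun i => ((σ i : ℝ) : ℂ)) = fun i => ((σ i : ℝ) : ℂ) := by
      funext i
      simp [Complex.conj_ofReal]
    rw [hD, Matrix.diagonal_conjTranspose, hfun]
  have hEH : Eᴴ = E := by
    have hfun : (star fun i => ((τ i : ℝ) : ℂ)) = fun i => ((τ i : ℝ) : ℂ) := by
      funext i
      simp [Complex.conj_ofReal]
    rw [hE, Matrix.diagonal_conjTranspose, hfun]
  have hDiH : Diᴴ = Di := by
    have hfun : (star fun i => (((σ i : ℝ) : ℂ))⁻¹) = fun i => (((σ i : ℝ) : ℂ))⁻¹ := by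
      funext i
      simp [Complex.conj_ofReal]
    rw [hDi, Matrix.diagonal_conjTranspose, hfun]
  have hEiH : Eiᴴ = Ei := by
    have hfun : (star fun i => (((τ i : ℝ) : ℂ))⁻¹) = fun i => (((τ i : ℝ) : ℂ))⁻¹ := by
      funext i
      simp [Complex.conj_ofReal]
    rw [hEi, Matrix.diagonal_conjTranspose, hfun]
  -- helper cancellation lemmas
  have hUc : ∀ {k : ℕ} (M : Matrix (Fin r) (Fin k) ℂ), U₁ᴴ * (U₁ * M) = M :=
    fun M => by rw [← Matrix.mul_assoc, hU, Matrix.one_mul]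
  have hVc : ∀ {k : ℕ} (M : Matrix (Fin r) (Fin k) ℂ), V₁ᴴ * (V₁ * M) = M :=
    fun M => by rw [← Matrix.mul_assoc, hV, Matrix.one_mul]
  have hWc : ∀ {k : ℕ} (M : Matrix (Fin r) (Fin k) ℂ), W₁ᴴ * (W₁ * M) = M :=
    fun M => by rw [← Matrix.mul_assoc, hW, Matrix.one_mul]
  have hDc : ∀ {k : ℕ} (M : Matrix (Fin r) (Fin k) ℂ), D * (Di * M) = M :=
    fun M => by rw [← Matrix.mul_assoc, hDDi, Matrix.one_mul]
  have hDc' : ∀ {k : ℕ} (M : Matrix (Fin r) (Fin k) ℂ), Di * (D * M) = M :=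
    fun M => by rw [← Matrix.mul_assoc, hDiD, Matrix.one_mul]
  have hEc : ∀ {k : ℕ} (M : Matrix (Fin r) (Fin k) ℂ), E * (Ei * M) = M :=
    fun M => by rw [← Matrix.mul_assoc, hEEi, Matrix.one_mul]
  have hEc' : ∀ {k : ℕ} (M : Matrix (Fin r) (Fin k) ℂ), Ei * (E * M) = M :=
    fun M => by rw [← Matrix.mul_assoc, hEiE, Matrix.one_mul]
  -- the explicit pseudoinverses
  have hXq : IsMoorePenrose X (V₁ * Di * U₁ᴴ) := by
    have hXXq : X * (V₁ * Di * U₁ᴴ) = U₁ * U₁ᴴ := by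
      rw [hX]
      simp only [Matrix.mul_assoc, hVc, hDc]
    have hXqX : (V₁ * Di * U₁ᴴ) * X = V₁ * V₁ᴴ := by
      rw [hX]
      simp only [Matrix.mul_assoc, hUc, hDc']
    refine ⟨?_, ?_, ?_, ?_⟩
    · rw [hXXq, hX]
      simp only [Matrix.mul_assoc, hUc]
    · rw [hXqX]
      simp only [Matrix.mul_assoc, hVc]
    · rw [hXXq, conjTranspose_mul, conjTranspose_conjTranspose]
    · rw [hXqX, conjTranspose_mul, conjTranspose_conjTranspose]
  have hZq : IsMoorePenrose Z (W₁ * Ei * U₁ᴴ) := by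
    have hZZq : Z * (W₁ * Ei * U₁ᴴ) = U₁ * U₁ᴴ := by
      rw [hZ]
      simp only [Matrix.mul_assoc, hWc, hEc]
    have hZqZ : (W₁ * Ei * U₁ᴴ) * Z = W₁ * W₁ᴴ := by
      rw [hZ]
      simp only [Matrix.mul_assoc, hUc, hEc']
    refine ⟨?_, ?_, ?_, ?_⟩
    · rw [hZZq, hZ]
      simp only [Matrix.mul_assoc, hUc]
    · rw [hZqZ]
      simp only [Matrix.mul_assoc, hWc]
    · rw [hZZq, conjTranspose_mul, conjTranspose_conjTranspose]
    · rw [hZqZ, conjTranspose_mul, conjTranspose_conjTranspose]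
  have hXp' : Xp = V₁ * Di * U₁ᴴ := mp_unique hXp hXq
  have hZp' : Zp = W₁ * Ei * U₁ᴴ := mp_unique hZp hZq
  -- key identity
  have h2 : (Di * V₁ᴴ) * (Xᴴ * W) * (W₁ * Ei) = (Di * V₁ᴴ) * (Yᴴ * Z) * (W₁ * Ei) := by
    rw [hXW]
  rw [hX, hZ] at h2
  simp only [conjTranspose_mul, conjTranspose_conjTranspose, hDH, Matrix.mul_assoc,
    hVc, hDc', hWc, hEc, hEEi, Matrix.mul_one] at h2
  -- h2 : Di * (V₁ᴴ * (V₁ * (D * (U₁ᴴ * (W * (W₁ * Ei)))))) = ... hopefully simplified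
  have key : U₁ᴴ * (Y * Xp)ᴴ * U₁ = U₁ᴴ * (W * Zp) * U₁ := by
    rw [hXp', hZp']
    simp only [conjTranspose_mul, conjTranspose_conjTranspose, hDiH, Matrix.mul_assoc,
      hUc, hU, Matrix.mul_one]
    rw [← h2]
  constructor
  · simp only [Matrix.mul_add, Matrix.add_mul, key]
  · simp only [Matrix.mul_sub, Matrix.sub_mul, key]
end

section
/- Let x, y be nonzero vectors in ℂⁿ with x*y ∈ ℝ. Then the set of Hermitian matrices Δ with Δx = y equals { y x⁺ + (y x⁺)* − (x⁺y) x x⁺ + P_x H P_x : H ∈ ℂ^{n,n}, H* = H }, where x⁺ = x*/‖x‖² and P_x = I − x x⁺. -/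
open Matrix

section aux

variable {n : ℕ}

lemma vvm (a b v : Fin n → ℂ) : (vecMulVec a b) *ᵥ v = (b ⬝ᵥ v) • a := by
  ext i
  simp only [mulVec, vecMulVec_apply, dotProduct, Pi.smul_apply, smul_eq_mul,
    Finset.sum_mul]
  exact Finset.sum_congr rfl fun j _ => by ring

lemma mvv (a b v : Fin n → ℂ) : v ᵥ* (vecMulVec a b) = (v ⬝ᵥ a) • b := by
  ext j
  simp only [vecMul, vecMulVec_apply, dotProduct, Pi.smul_apply, smul_eq_mul,
    Finset.sum_mul]
  exact Finset.sum_congr rfl fun i _ => by ring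

lemma vv_mul (a b : Fin n → ℂ) (M : Matrix (Fin n) (Fin n) ℂ) :
    (vecMulVec a b) * M = vecMulVec a (b ᵥ* M) := by
  ext i j
  simp only [mul_apply, vecMulVec_apply, vecMul, dotProduct, Finset.mul_sum]
  exact Finset.sum_congr rfl fun k _ => by ring

lemma mul_vv (a b : Fin n → ℂ) (M : Matrix (Fin n) (Fin n) ℂ) :
    M * (vecMulVec a b) = vecMulVec (M *ᵥ a) b := by
  ext i j
  simp only [mul_apply, vecMulVec_apply, mulVec, dotProduct, Finset.sum_mul]
  exact Finset.sum_congr rfl fun k _ => by ring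

lemma vv_ct (a b : Fin n → ℂ) :
    (vecMulVec a b)ᴴ = vecMulVec (star b) (star a) := by
  ext i j
  simp [conjTranspose_apply, vecMulVec_apply, mul_comm]

lemma vv_smul (c : ℂ) (a b : Fin n → ℂ) :
    vecMulVec a (c • b) = c • vecMulVec a b := by
  ext i j
  simp [vecMulVec_apply, mul_left_comm]

end aux

/-- Characterization of all Hermitian mappings `Δx = y` when `x*y ∈ ℝ`. -/
theorem hermitian_mapping_char {n : ℕ} (x y : Fin n → ℂ) (hx : x ≠ 0) (hy : y ≠ 0)
    (hreal : (star x ⬝ᵥ y).im = 0) :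
    {Δ : Matrix (Fin n) (Fin n) ℂ | Δᴴ = Δ ∧ Δ.mulVec x = y} =
      {Δ : Matrix (Fin n) (Fin n) ℂ | ∃ H : Matrix (Fin n) (Fin n) ℂ, Hᴴ = H ∧
        Δ = (star x ⬝ᵥ x)⁻¹ • Matrix.vecMulVec y (star x)
            + ((star x ⬝ᵥ x)⁻¹ • Matrix.vecMulVec y (star x))ᴴ
            - ((star x ⬝ᵥ x)⁻¹ * (star x ⬝ᵥ y)) •
                ((star x ⬝ᵥ x)⁻¹ • Matrix.vecMulVec x (star x))
            + (1 - (star x ⬝ᵥ x)⁻¹ • Matrix.vecMulVec x (star x)) * H *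
                (1 - (star x ⬝ᵥ x)⁻¹ • Matrix.vecMulVec x (star x))} := by
  set s : ℂ := star x ⬝ᵥ x with hs
  set t : ℂ := star x ⬝ᵥ y with ht
  have hsum : s = ((∑ i, Complex.normSq (x i) : ℝ) : ℂ) := by
    rw [hs, dotProduct]
    push_cast
    exact Finset.sum_congr rfl fun i _ => by
      simpa using (Complex.normSq_eq_conj_mul_self (z := x i)).symm
  have hs0 : s ≠ 0 := by
    intro h
    apply hx
    rw [hsum, Complex.ofReal_eq_zero] at h
    have := (Finset.sum_eq_zero_iff_of_nonneg
      (fun i _ => Complex.normSq_nonneg (x i))).mp h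
    funext i
    exact Complex.normSq_eq_zero.mp (this i (Finset.mem_univ i))
  have hss : star s = s := by rw [hsum]; exact Complex.conj_ofReal _
  have hcs : star s⁻¹ = s⁻¹ := by rw [star_inv₀, hss]
  have hts : star t = t := by
    rw [Complex.star_def, Complex.conj_eq_iff_im]; exact hreal
  have htyx : star y ⬝ᵥ x = t := by
    rw [← hts, ht, star_dotProduct]
  set K : Matrix (Fin n) (Fin n) ℂ := vecMulVec x (star x) with hK
  have hKH : Kᴴ = K := by rw [hK, vv_ct, star_star]
  have hKx : K *ᵥ x = s • x := by rw [hK, vvm, ← hs]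
  set P : Matrix (Fin n) (Fin n) ℂ := 1 - s⁻¹ • K with hP
  have hPH : Pᴴ = P := by
    rw [hP, conjTranspose_sub, conjTranspose_smul, hKH, hcs, conjTranspose_one]
  have hPx : P *ᵥ x = 0 := by
    rw [hP, sub_mulVec, smul_mulVec, hKx, one_mulVec, smul_smul,
      inv_mul_cancel₀ hs0, one_smul, sub_self]
  have hAH : (s⁻¹ • vecMulVec y (star x))ᴴ = s⁻¹ • vecMulVec x (star y) := by
    rw [conjTranspose_smul, hcs, vv_ct, star_star]
  have hAx : (vecMulVec y (star x)) *ᵥ x = s • y := by rw [vvm, ← hs]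
  have hBx : (vecMulVec x (star y)) *ᵥ x = t • x := by rw [vvm, htyx]
  have e3 : (vecMulVec x (star y)) * K = t • K := by
    rw [hK, vv_mul, mvv, htyx, vv_smul]
  ext Δ
  simp only [Set.mem_setOf_eq]
  constructor
  · rintro ⟨hH, hmv⟩
    refine ⟨Δ, hH, ?_⟩
    have hxΔ : star x ᵥ* Δ = star y := by
      rw [← hmv, star_mulVec, hH]
    have e1 : Δ * K = vecMulVec y (star x) := by rw [hK, mul_vv, hmv]
    have e2 : K * Δ = vecMulVec x (star y) := by rw [hK, vv_mul, hxΔ]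
    have hPΔ : P * Δ = Δ - s⁻¹ • vecMulVec x (star y) := by
      rw [hP, sub_mul, one_mul, smul_mul_assoc, e2]
    have hΔP : Δ * P = Δ - s⁻¹ • vecMulVec y (star x) := by
      rw [hP, mul_sub, mul_one, mul_smul_comm, e1]
    have hBP : vecMulVec x (star y) * P
        = vecMulVec x (star y) - (s⁻¹ * t) • K := by
      rw [hP, mul_sub, mul_one, mul_smul_comm, e3, smul_smul]
    have hPHP : P * Δ * P
        = Δ - s⁻¹ • vecMulVec y (star x) - s⁻¹ • vecMulVec x (star y)
          + (s⁻¹ * t) • (s⁻¹ • K) := by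
      rw [hPΔ, sub_mul, smul_mul_assoc, hΔP, hBP, smul_sub, smul_smul, smul_smul]
      rw [show s⁻¹ * (s⁻¹ * t) = s⁻¹ * t * s⁻¹ by ring]
      module
    rw [hAH, hPHP]
    module
  · rintro ⟨H, hHH, rfl⟩
    constructor
    · have h3 : (((s⁻¹ * t) • (s⁻¹ • K))ᴴ) = (s⁻¹ * t) • (s⁻¹ • K) := by
        rw [conjTranspose_smul, conjTranspose_smul, hKH, hcs, star_mul', hts, hcs,
          mul_comm]
      have h4 : (P * H * P)ᴴ = P * H * P := by
        rw [conjTranspose_mul, conjTranspose_mul, hPH, hHH, mul_assoc]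
      rw [conjTranspose_add, conjTranspose_sub, conjTranspose_add,
        conjTranspose_conjTranspose, h3, h4]
      abel
    · rw [add_mulVec, sub_mulVec, add_mulVec, smul_mulVec, hAx, smul_smul,
        inv_mul_cancel₀ hs0, one_smul, hAH, smul_mulVec, hBx,
        smul_mulVec, smul_mulVec, hKx, ← mulVec_mulVec,
        ← mulVec_mulVec, hPx, mulVec_zero, mulVec_zero, smul_smul, smul_smul,
        smul_smul, mul_assoc, mul_assoc, inv_mul_cancel₀ hs0, mul_one]
      module
end

section
/- Let x, y be nonzero vectors in ℂⁿ. There exists a skew-Hermitian matrix Δ ∈ ℂ^{n,n} with Δx = y if and only if x*y is purely imaginary. -/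
/-!
If `Δᴴ = -Δ` then `x* Δ x` equals minus its own conjugate, which gives necessity.
Conversely, pick `u` with `u* x = 1` (for `x ≠ 0` a rescaled coordinate vector will do) and put
`Δ = y u* - u y* + (y* x) u u*`. The first two terms form a skew-Hermitian matrix sending `x` to
`y - (y* x) u`, and the last term repairs the defect; it is skew-Hermitian exactly when
`y* x = conj (x* y)` is skew, i.e. purely imaginary.
-/

open Matrix

theorem RCLike.star_eq_neg_iff_re_eq_zero {K : Type*} [RCLike K] {z : K} :
    star z = -z ↔ re z = 0 := by
  rw [RCLike.ext_iff]
  simp only [star_def, conj_re, conj_im, map_neg, and_true, self_eq_neg]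

namespace Matrix

variable {n R : Type*} [Fintype n]

theorem star_dotProduct_mulVec_of_conjTranspose_eq_neg [CommRing R] [StarRing R]
    {Δ : Matrix n n R} (hΔ : Δᴴ = -Δ) (x : n → R) :
    star (star x ⬝ᵥ Δ *ᵥ x) = -(star x ⬝ᵥ Δ *ᵥ x) := by
  rw [← star_dotProduct, star_mulVec, ← dotProduct_mulVec, hΔ, neg_mulVec, dotProduct_neg]

theorem exists_star_dotProduct_eq_one [DecidableEq n] [Field R] [StarRing R] {x : n → R}
    (hx : x ≠ 0) : ∃ u : n → R, star u ⬝ᵥ x = 1 := by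
  obtain ⟨i, hi⟩ := Function.ne_iff.mp hx
  exact ⟨star (Pi.single i (x i)⁻¹), by simpa using inv_mul_cancel₀ hi⟩

theorem exists_conjTranspose_eq_neg_mulVec_eq [CommRing R] [StarRing R] {x u y : n → R}
    (hu : star u ⬝ᵥ x = 1) (hxy : star (star x ⬝ᵥ y) = -(star x ⬝ᵥ y)) :
    ∃ Δ : Matrix n n R, Δᴴ = -Δ ∧ Δ *ᵥ x = y := by
  rw [star_dotProduct, star_star] at hxy
  set c := star y ⬝ᵥ x
  have hc : star c = -c := neg_eq_iff_eq_neg.mp hxy.symm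
  refine ⟨vecMulVec y (star u) - vecMulVec u (star y) + c • vecMulVec u (star u), ?_, ?_⟩
  · simp only [conjTranspose_add, conjTranspose_sub, conjTranspose_smul, conjTranspose_vecMulVec,
      star_star, hc, neg_smul]
    abel
  · simp only [add_mulVec, sub_mulVec, smul_mulVec, vecMulVec_mulVec, hu, op_smul_eq_smul,
      one_smul]
    abel

theorem exists_conjTranspose_eq_neg_mulVec_eq_iff [Field R] [StarRing R] {x : n → R}
    (hx : x ≠ 0) (y : n → R) :
    (∃ Δ : Matrix n n R, Δᴴ = -Δ ∧ Δ *ᵥ x = y) ↔ star (star x ⬝ᵥ y) = -(star x ⬝ᵥ y) := by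
  classical
  constructor
  · rintro ⟨Δ, hΔ, rfl⟩
    exact star_dotProduct_mulVec_of_conjTranspose_eq_neg hΔ x
  · intro hxy
    obtain ⟨u, hu⟩ := exists_star_dotProduct_eq_one hx
    exact exists_conjTranspose_eq_neg_mulVec_eq hu hxy

end Matrix

theorem skewHermitian_mapping_exists_general {n : ℕ} (x y : Fin n → ℂ) (hx : x ≠ 0) :
    (∃ Δ : Matrix (Fin n) (Fin n) ℂ, Δᴴ = -Δ ∧ Δ.mulVec x = y) ↔ (star x ⬝ᵥ y).re = 0 :=
  (exists_conjTranspose_eq_neg_mulVec_eq_iff hx y).trans RCLike.star_eq_neg_iff_re_eq_zero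

/-- There is a skew-Hermitian `Δ` with `Δx = y` iff `x*y` is purely imaginary. -/
theorem skewHermitian_mapping_exists {n : ℕ} (x y : Fin n → ℂ) (hx : x ≠ 0) (hy : y ≠ 0) :
    (∃ Δ : Matrix (Fin n) (Fin n) ℂ, Δᴴ = -Δ ∧ Δ.mulVec x = y) ↔ (star x ⬝ᵥ y).re = 0 :=
  skewHermitian_mapping_exists_general x y hx
end

section
/- Let x, y be nonzero vectors in ℂⁿ. There exists a complex skew-symmetric matrix Δ ∈ ℂ^{n,n} (Δᵀ = −Δ) with Δx = y if and only if xᵀy = 0. -/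
open Matrix

/-- There is a complex skew-symmetric `Δ` with `Δx = y` iff `xᵀy = 0`. -/
theorem skewSymmetric_mapping_exists {n : ℕ} (x y : Fin n → ℂ) (hx : x ≠ 0) (hy : y ≠ 0) :
    (∃ Δ : Matrix (Fin n) (Fin n) ℂ, Δᵀ = -Δ ∧ Δ.mulVec x = y) ↔ x ⬝ᵥ y = 0 := by
  constructor
  · rintro ⟨Δ, hskew, rfl⟩
    have h1 : x ⬝ᵥ Δ *ᵥ x = -(x ⬝ᵥ Δ *ᵥ x) := by
      calc x ⬝ᵥ Δ *ᵥ x = (x ᵥ* Δ) ⬝ᵥ x := by rw [dotProduct_mulVec]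
        _ = (Δᵀ *ᵥ x) ⬝ᵥ x := by rw [mulVec_transpose]
        _ = ((-Δ) *ᵥ x) ⬝ᵥ x := by rw [hskew]
        _ = -(x ⬝ᵥ Δ *ᵥ x) := by rw [neg_mulVec, neg_dotProduct, dotProduct_comm]
    linear_combination h1 / 2
  · intro h
    obtain ⟨i₀, hi₀⟩ := Function.ne_iff.mp hx
    have hi₀' : x i₀ ≠ 0 := hi₀
    set z : Fin n → ℂ := fun j => if j = i₀ then (x i₀)⁻¹ else 0 with hz
    have hzx : ∑ j, z j * x j = 1 := by
      rw [Finset.sum_eq_single i₀]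
      · simp [hz, inv_mul_cancel₀ hi₀']
      · intro b _ hb; simp [hz, hb]
      · simp
    have hyx : ∑ j, y j * x j = 0 := by
      simpa [dotProduct, mul_comm] using h
    refine ⟨Matrix.of fun i j => y i * z j - z i * y j, ?_, ?_⟩
    · ext i j; simp [Matrix.transpose_apply]; ring
    · ext i
      simp only [mulVec, dotProduct, Matrix.of_apply, sub_mul, Finset.sum_sub_distrib,
        mul_assoc, ← Finset.mul_sum, hzx, hyx, mul_one, mul_zero, sub_zero]
end

section
/- Let x, w ∈ ℂ^m \ {0} and y, z ∈ ℂⁿ \ {0}. There exists a matrix Δ ∈ ℂ^{n,m} with Δx = y and Δ*z = w if and only if x*w = y*z. -/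
open Matrix

lemma vecMulVec_mulVec' {n m : ℕ} (a : Fin n → ℂ) (b v : Fin m → ℂ) :
    (vecMulVec a b).mulVec v = (b ⬝ᵥ v) • a := by
  ext i
  simp only [mulVec, dotProduct, vecMulVec_apply, Pi.smul_apply, smul_eq_mul,
    Finset.sum_mul]
  apply Finset.sum_congr rfl
  intro j _
  ring

lemma conjTranspose_vecMulVec' {n m : ℕ} (a : Fin n → ℂ) (b : Fin m → ℂ) :
    (vecMulVec a b)ᴴ = vecMulVec (star b) (star a) := by
  ext i j
  simp [vecMulVec_apply, conjTranspose_apply, mul_comm]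

lemma star_dot_self_ne_zero {k : ℕ} {v : Fin k → ℂ} (hv : v ≠ 0) :
    star v ⬝ᵥ v ≠ 0 := by
  intro h
  apply hv
  have h' : ((∑ i, Complex.normSq (v i) : ℝ) : ℂ) = 0 := by
    rw [← h]
    simp only [dotProduct, Pi.star_apply, Complex.star_def]
    push_cast
    apply Finset.sum_congr rfl
    intro i _
    rw [← Complex.mul_conj, mul_comm]
  rw [Complex.ofReal_eq_zero] at h'
  have := (Finset.sum_eq_zero_iff_of_nonneg
    (fun i _ => Complex.normSq_nonneg (v i))).mp h'
  funext i
  exact Complex.normSq_eq_zero.mp (this i (Finset.mem_univ i))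

lemma star_dot_self_real {k : ℕ} (v : Fin k → ℂ) :
    star (star v ⬝ᵥ v) = star v ⬝ᵥ v := by
  simp only [dotProduct, star_sum, Pi.star_apply, star_mul', star_star]
  exact Finset.sum_congr rfl (fun i _ => mul_comm _ _)

/-- There is `Δ ∈ ℂ^{n,m}` with `Δx = y` and `Δ*z = w` iff `x*w = y*z`. -/
theorem two_sided_mapping_exists {n m : ℕ} (x w : Fin m → ℂ) (y z : Fin n → ℂ)
    (hx : x ≠ 0) (hw : w ≠ 0) (hy : y ≠ 0) (hz : z ≠ 0) :
    (∃ Δ : Matrix (Fin n) (Fin m) ℂ, Δ.mulVec x = y ∧ Δᴴ.mulVec z = w) ↔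
      star x ⬝ᵥ w = star y ⬝ᵥ z := by
  constructor
  · rintro ⟨Δ, h1, h2⟩
    calc star x ⬝ᵥ w = star x ⬝ᵥ Δᴴ.mulVec z := by rw [h2]
      _ = star (Δ.mulVec x) ⬝ᵥ z := by
          rw [dotProduct_mulVec, star_mulVec]
      _ = star y ⬝ᵥ z := by rw [h1]
  · intro h
    set α : ℂ := star x ⬝ᵥ x with hα
    set β : ℂ := star z ⬝ᵥ z with hβ
    set c : ℂ := star x ⬝ᵥ w with hc
    have hα0 : α ≠ 0 := star_dot_self_ne_zero hx
    have hβ0 : β ≠ 0 := star_dot_self_ne_zero hz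
    have hαr : star α = α := star_dot_self_real x
    have hβr : star β = β := star_dot_self_real z
    refine ⟨α⁻¹ • vecMulVec y (star x)
        + β⁻¹ • vecMulVec z (star w - (star c * α⁻¹) • star x), ?_, ?_⟩
    · rw [add_mulVec, smul_mulVec, smul_mulVec,
        vecMulVec_mulVec', vecMulVec_mulVec']
      have h1 : star x ⬝ᵥ x = α := rfl
      have h2 : (star w - (star c * α⁻¹) • star x) ⬝ᵥ x = 0 := by
        rw [sub_dotProduct, smul_dotProduct, h1, smul_eq_mul]
        have hwx : star w ⬝ᵥ x = star c := by
          rw [star_dotProduct, ← hc]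
        rw [hwx, mul_assoc, inv_mul_cancel₀ hα0, mul_one, sub_self]
      rw [h1, h2, zero_smul, smul_zero, add_zero, smul_smul,
        inv_mul_cancel₀ hα0, one_smul]
    · rw [conjTranspose_add, conjTranspose_smul, conjTranspose_smul,
        conjTranspose_vecMulVec', conjTranspose_vecMulVec', star_star]
      rw [add_mulVec, smul_mulVec, smul_mulVec,
        vecMulVec_mulVec', vecMulVec_mulVec']
      have h1 : star y ⬝ᵥ z = c := h.symm
      have h2 : star z ⬝ᵥ z = β := rfl
      have hsx : star (star w - (star c * α⁻¹) • star x)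
          = w - (c * α⁻¹) • x := by
        funext j
        simp only [Pi.star_apply, Pi.sub_apply, Pi.smul_apply, smul_eq_mul,
          star_sub, star_mul', star_star, star_inv₀, hαr]
      rw [hsx, h1, h2]
      have hinv : star (α⁻¹) = α⁻¹ := by rw [star_inv₀, hαr]
      have hβinv : star (β⁻¹) = β⁻¹ := by rw [star_inv₀, hβr]
      rw [hinv, hβinv, smul_smul]
      rw [smul_smul, inv_mul_cancel₀ hβ0, one_smul]
      funext j
      simp only [Pi.add_apply, Pi.smul_apply, Pi.sub_apply, smul_eq_mul]
      ring
end

section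
/- Let x, y be nonzero vectors in ℂⁿ. There exists a Hermitian positive semidefinite matrix Δ ∈ ℂ^{n,n} with Δx = y if and only if x*y > 0 (i.e., x*y is real and positive). -/
open Matrix
open scoped ComplexOrder

namespace Matrix

variable {𝕜 n : Type*} [RCLike 𝕜] [Fintype n]

theorem PosSemidef.dotProduct_mulVec_pos {A : Matrix n n 𝕜} (hA : A.PosSemidef) {x : n → 𝕜}
    (hAx : A *ᵥ x ≠ 0) : 0 < star x ⬝ᵥ A *ᵥ x :=
  (hA.dotProduct_mulVec_nonneg x).lt_of_ne' (mt (hA.dotProduct_mulVec_zero_iff x).mp hAx)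

theorem exists_posSemidef_mulVec_eq_iff {x y : n → 𝕜} (hy : y ≠ 0) :
    (∃ A : Matrix n n 𝕜, A.PosSemidef ∧ A *ᵥ x = y) ↔ 0 < star x ⬝ᵥ y := by
  refine ⟨fun ⟨A, hA, hAx⟩ ↦ hAx ▸ hA.dotProduct_mulVec_pos (hAx ▸ hy), fun hc ↦ ?_⟩
  have hyx : star y ⬝ᵥ x = star x ⬝ᵥ y := by
    rw [star_dotProduct, (IsSelfAdjoint.of_nonneg hc.le).star_eq]
  refine ⟨(star x ⬝ᵥ y)⁻¹ • vecMulVec y (star y),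
    (posSemidef_vecMulVec_self_star y).smul (inv_nonneg.2 hc.le), ?_⟩
  rw [smul_mulVec, vecMulVec_mulVec, hyx, op_smul_eq_smul, inv_smul_smul₀ hc.ne']

end Matrix

theorem psd_mapping_exists_general {n : ℕ} (x y : Fin n → ℂ) (hy : y ≠ 0) :
    (∃ Δ : Matrix (Fin n) (Fin n) ℂ, Δ.PosSemidef ∧ Δ.mulVec x = y) ↔
      (star x ⬝ᵥ y).im = 0 ∧ 0 < (star x ⬝ᵥ y).re := by
  rw [exists_posSemidef_mulVec_eq_iff hy, Complex.pos_iff, eq_comm, and_comm]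

/-- There is a positive semidefinite `Δ` with `Δx = y` iff `x*y > 0`. -/
theorem psd_mapping_exists {n : ℕ} (x y : Fin n → ℂ) (hx : x ≠ 0) (hy : y ≠ 0) :
    (∃ Δ : Matrix (Fin n) (Fin n) ℂ, Δ.PosSemidef ∧ Δ.mulVec x = y) ↔
      (star x ⬝ᵥ y).im = 0 ∧ 0 < (star x ⬝ᵥ y).re :=
  psd_mapping_exists_general x y hy
end

section
/- Let x, y be nonzero vectors in ℂⁿ. There exists a dissipative matrix Δ ∈ ℂ^{n,n} (i.e., Δ + Δ* ⪰ 0) with Δx = y if and only if Re(x*y) ≥ 0. -/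
open Matrix
open scoped ComplexOrder

/-!
Necessity: `x* (Δ + Δ*) x = 2 Re (x* Δ x) = 2 Re (x* y)`. Sufficiency: pick a row vector `w`
with `w x = 1` and put `Δ = y w - w* y* + (y* x) w* w`. It maps `x` to `y`, and since
`y w - w* y*` is skew-Hermitian, `Δ + Δ* = 2 Re (x* y) w* w`.
-/

namespace Matrix

variable {n 𝕜 : Type*} [Fintype n] [RCLike 𝕜]

open RCLike in
lemma re_dotProduct_mulVec_nonneg_of_posSemidef_add_conjTranspose {A : Matrix n n 𝕜}
    (hA : (A + Aᴴ).PosSemidef) (x : n → 𝕜) : 0 ≤ re (star x ⬝ᵥ A *ᵥ x) := by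
  have hstar : star x ⬝ᵥ Aᴴ *ᵥ x = star (star x ⬝ᵥ A *ᵥ x) := by
    rw [star_dotProduct, star_mulVec, conjTranspose_conjTranspose, dotProduct_mulVec]
  have := hA.dotProduct_mulVec_nonneg x
  rw [add_mulVec, dotProduct_add, hstar, star_def, add_conj] at this
  rw [← ofReal_ofNat, ← ofReal_mul, ofReal_nonneg] at this
  linarith

lemma exists_dotProduct_eq_one {K : Type*} [DivisionSemiring K] {x : n → K} (hx : x ≠ 0) :
    ∃ w : n → K, w ⬝ᵥ x = 1 := by
  classical
  obtain ⟨i, hi⟩ := Function.ne_iff.mp hx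
  exact ⟨Pi.single i (x i)⁻¹, by rw [single_dotProduct, inv_mul_cancel₀ hi]⟩

def dissipativeMap (x y w : n → 𝕜) : Matrix n n 𝕜 :=
  vecMulVec y w - vecMulVec (star w) (star y) + (star y ⬝ᵥ x) • vecMulVec (star w) w

variable {x y w : n → 𝕜}

lemma dissipativeMap_mulVec (hw : w ⬝ᵥ x = 1) : dissipativeMap x y w *ᵥ x = y := by
  simp [dissipativeMap, add_mulVec, sub_mulVec, smul_mulVec, vecMulVec_mulVec, hw]

lemma dissipativeMap_add_conjTranspose :
    dissipativeMap x y w + (dissipativeMap x y w)ᴴ =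
      (star y ⬝ᵥ x + star (star y ⬝ᵥ x)) • vecMulVec (star w) w := by
  simp only [dissipativeMap, conjTranspose_add, conjTranspose_sub, conjTranspose_smul,
    conjTranspose_vecMulVec, star_star, add_smul]
  abel

open RCLike in
lemma posSemidef_dissipativeMap_add_conjTranspose (h : 0 ≤ re (star x ⬝ᵥ y)) :
    (dissipativeMap x y w + (dissipativeMap x y w)ᴴ).PosSemidef := by
  rw [dissipativeMap_add_conjTranspose, star_def, add_conj, star_dotProduct, star_def, conj_re]
  refine (posSemidef_vecMulVec_star_self w).smul ?_
  positivity

end Matrix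

theorem dissipative_mapping_exists_general {n : ℕ} (x y : Fin n → ℂ) (hx : x ≠ 0) :
    (∃ Δ : Matrix (Fin n) (Fin n) ℂ, (Δ + Δᴴ).PosSemidef ∧ Δ.mulVec x = y) ↔
      0 ≤ (star x ⬝ᵥ y).re := by
  constructor
  · rintro ⟨Δ, hΔ, rfl⟩
    exact re_dotProduct_mulVec_nonneg_of_posSemidef_add_conjTranspose hΔ x
  · intro h
    obtain ⟨w, hw⟩ := exists_dotProduct_eq_one hx
    exact ⟨dissipativeMap x y w, posSemidef_dissipativeMap_add_conjTranspose h,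
      dissipativeMap_mulVec hw⟩

/-- There is a dissipative `Δ` (i.e. `Δ + Δ* ⪰ 0`) with `Δx = y` iff `Re(x*y) ≥ 0`. -/
theorem dissipative_mapping_exists {n : ℕ} (x y : Fin n → ℂ) (hx : x ≠ 0) (hy : y ≠ 0) :
    (∃ Δ : Matrix (Fin n) (Fin n) ℂ, (Δ + Δᴴ).PosSemidef ∧ Δ.mulVec x = y) ↔
      0 ≤ (star x ⬝ᵥ y).re :=
  dissipative_mapping_exists_general x y hx
end

section
/- Let x = [x₁; x₂] with x₁ ∈ ℂⁿ, x₂ ∈ ℂ^m \ {0}, y, z ∈ ℂⁿ, and w = [w₁; w₂] with w₁ ∈ ℂⁿ \ {0}, w₂ ∈ ℂ^m \ {0}. There exist Δ₁ ∈ ℂ^{n,n} positive semidefinite and Δ₂ ∈ ℂ^{n,m} such that Δ := [Δ₁ Δ₂] satisfies Δx = y and Δ*z = w, if and only if x*w = y*z and z*w₁ > 0. -/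
/-!
A positive semidefinite `Δ₁` with `Δ₁ z = w₁` exists exactly when `z*w₁ > 0`: the quadratic
form gives necessity, and `w₁ w₁* / (z*w₁)` is a witness. Once `Δ₁` is fixed, `Δ₂` only has to
solve the unstructured mapping problem `Δ₂ x₂ = y - Δ₁ x₁`, `Δ₂* z = w₂`, which is solvable
(for `x₂, z ≠ 0`) exactly when `x₂* w₂ = (y - Δ₁ x₁)* z`, i.e. when `x*w = y*z`.
-/

open Matrix
open scoped ComplexOrder

namespace Matrix

theorem star_dotProduct_conjTranspose_mulVec {R ι κ : Type*} [NonUnitalSemiring R] [StarRing R]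
    [Fintype ι] [Fintype κ] (A : Matrix ι κ R) (x : κ → R) (z : ι → R) :
    star x ⬝ᵥ Aᴴ *ᵥ z = star (A *ᵥ x) ⬝ᵥ z := by
  rw [star_mulVec, dotProduct_mulVec]

variable {𝕜 ι κ : Type*} [RCLike 𝕜] [Fintype ι] [Fintype κ]

theorem PosSemidef.star_dotProduct_pos_of_mulVec_eq {A : Matrix ι ι 𝕜} (hA : A.PosSemidef)
    {z w : ι → 𝕜} (hAz : A *ᵥ z = w) (hw : w ≠ 0) :
    0 < star z ⬝ᵥ w := by
  subst hAz
  exact (hA.dotProduct_mulVec_nonneg z).lt_of_ne fun h =>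
    hw ((hA.dotProduct_mulVec_zero_iff z).mp h.symm)

theorem exists_posSemidef_mulVec_eq {z w : ι → 𝕜} (h : 0 < star z ⬝ᵥ w) :
    ∃ A : Matrix ι ι 𝕜, A.PosSemidef ∧ A *ᵥ z = w := by
  set β := star z ⬝ᵥ w
  have hβ : star w ⬝ᵥ z = β := by
    rw [star_dotProduct, (IsSelfAdjoint.of_nonneg h.le).star_eq]
  refine ⟨β⁻¹ • vecMulVec w (star w),
    (posSemidef_vecMulVec_self_star w).smul (inv_nonneg.mpr h.le), ?_⟩
  rw [smul_mulVec, vecMulVec_mulVec, op_smul_eq_smul, hβ, smul_smul, inv_mul_cancel₀ h.ne',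
    one_smul]

theorem exists_mulVec_eq_conjTranspose_mulVec_eq {x w : κ → 𝕜} {u z : ι → 𝕜} (hx : x ≠ 0)
    (hz : z ≠ 0) (h : star x ⬝ᵥ w = star u ⬝ᵥ z) :
    ∃ A : Matrix ι κ 𝕜, A *ᵥ x = u ∧ Aᴴ *ᵥ z = w := by
  set α := star x ⬝ᵥ x
  set γ := star z ⬝ᵥ z
  have hα : α ≠ 0 := dotProduct_star_self_eq_zero.not.mpr hx
  have hγ : γ ≠ 0 := dotProduct_star_self_eq_zero.not.mpr hz
  have hαs : star α = α := (star_dotProduct x x).symm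
  have hγs : star γ = γ := (star_dotProduct z z).symm
  -- `c ⊥ x`, so the rank-one correction `z c* / γ` does not disturb `A x = u`.
  set c := w - (α⁻¹ * (star u ⬝ᵥ z)) • x
  have hcx : star c ⬝ᵥ x = 0 := by
    rw [star_sub, star_smul, sub_dotProduct, smul_dotProduct, star_dotProduct w, h, star_mul',
      star_inv₀, hαs, smul_eq_mul, mul_right_comm, inv_mul_cancel₀ hα, one_mul, sub_self]
  refine ⟨α⁻¹ • vecMulVec u (star x) + γ⁻¹ • vecMulVec z (star c), ?_, ?_⟩
  · rw [add_mulVec, smul_mulVec, smul_mulVec, vecMulVec_mulVec, vecMulVec_mulVec,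
      op_smul_eq_smul, op_smul_eq_smul, hcx, smul_smul, inv_mul_cancel₀ hα, one_smul, zero_smul,
      smul_zero, add_zero]
  · simp only [conjTranspose_add, conjTranspose_smul, conjTranspose_vecMulVec, star_star,
      star_inv₀, hαs, hγs, add_mulVec, smul_mulVec, vecMulVec_mulVec, op_smul_eq_smul]
    rw [smul_smul, smul_smul, inv_mul_cancel₀ hγ, one_smul]
    exact add_sub_cancel _ _

end Matrix

theorem dspsdm_exists_general {n m : ℕ} (x₁ : Fin n → ℂ) (x₂ : Fin m → ℂ) (y z : Fin n → ℂ)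
    (w₁ : Fin n → ℂ) (w₂ : Fin m → ℂ)
    (hx₂ : x₂ ≠ 0) (hw₁ : w₁ ≠ 0) :
    (∃ (Δ₁ : Matrix (Fin n) (Fin n) ℂ) (Δ₂ : Matrix (Fin n) (Fin m) ℂ),
      Δ₁.PosSemidef ∧ Δ₁.mulVec x₁ + Δ₂.mulVec x₂ = y ∧
      Δ₁ᴴ.mulVec z = w₁ ∧ Δ₂ᴴ.mulVec z = w₂) ↔
    (star x₁ ⬝ᵥ w₁ + star x₂ ⬝ᵥ w₂ = star y ⬝ᵥ z ∧
      (star z ⬝ᵥ w₁).im = 0 ∧ 0 < (star z ⬝ᵥ w₁).re) := by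
  have hpos : 0 < star z ⬝ᵥ w₁ ↔ (star z ⬝ᵥ w₁).im = 0 ∧ 0 < (star z ⬝ᵥ w₁).re := by
    rw [Complex.pos_iff, and_comm, eq_comm]
  rw [← hpos]
  constructor
  · rintro ⟨Δ₁, Δ₂, hΔ₁, hx, hz₁, hz₂⟩
    refine ⟨?_, hΔ₁.star_dotProduct_pos_of_mulVec_eq (hΔ₁.1.eq ▸ hz₁) hw₁⟩
    rw [← hz₁, ← hz₂, star_dotProduct_conjTranspose_mulVec, star_dotProduct_conjTranspose_mulVec,
      ← add_dotProduct, ← star_add, hx]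
  · rintro ⟨hxw, hzw⟩
    obtain ⟨Δ₁, hΔ₁, hz₁⟩ := exists_posSemidef_mulVec_eq hzw
    have hz : z ≠ 0 := by
      rintro rfl
      simp at hzw
    have hxw₂ : star x₂ ⬝ᵥ w₂ = star (y - Δ₁ *ᵥ x₁) ⬝ᵥ z := by
      rw [star_sub, sub_dotProduct, ← star_dotProduct_conjTranspose_mulVec, hΔ₁.1.eq, hz₁,
        ← hxw, add_sub_cancel_left]
    obtain ⟨Δ₂, hx, hz₂⟩ := exists_mulVec_eq_conjTranspose_mulVec_eq hx₂ hz hxw₂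
    exact ⟨Δ₁, Δ₂, hΔ₁, by rw [hx, add_sub_cancel], by rwa [hΔ₁.1.eq], hz₂⟩

/-- Doubly structured positive semidefinite mapping problem: existence of `Δ = [Δ₁ Δ₂]`
with `Δ₁ ⪰ 0`, `Δx = y`, `Δ*z = w` iff `x*w = y*z` and `z*w₁ > 0`. -/
theorem dspsdm_exists {n m : ℕ} (x₁ : Fin n → ℂ) (x₂ : Fin m → ℂ) (y z : Fin n → ℂ)
    (w₁ : Fin n → ℂ) (w₂ : Fin m → ℂ)
    (hx₂ : x₂ ≠ 0) (hw₁ : w₁ ≠ 0) (hw₂ : w₂ ≠ 0) :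
    (∃ (Δ₁ : Matrix (Fin n) (Fin n) ℂ) (Δ₂ : Matrix (Fin n) (Fin m) ℂ),
      Δ₁.PosSemidef ∧ Δ₁.mulVec x₁ + Δ₂.mulVec x₂ = y ∧
      Δ₁ᴴ.mulVec z = w₁ ∧ Δ₂ᴴ.mulVec z = w₂) ↔
    (star x₁ ⬝ᵥ w₁ + star x₂ ⬝ᵥ w₂ = star y ⬝ᵥ z ∧
      (star z ⬝ᵥ w₁).im = 0 ∧ 0 < (star z ⬝ᵥ w₁).re) :=
  dspsdm_exists_general x₁ x₂ y z w₁ w₂ hx₂ hw₁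
end
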